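/- Let E be a real inner product space, r > 0, and p₁, p₂, p₃ ∈ E with ‖p₁‖ = ‖p₂‖ = ‖p₃‖ = r and p₁ + p₂ + p₃ = 0. For w = (w₁, w₂, w₃) in the probability simplex (wᵢ ≥ 0, w₁ + w₂ + w₃ = 1), define θ(w) := w₁p₁ + w₂p₂ + w₃p₃ and U(w) := −‖p₁ − θ(w)‖² − ‖p₂ − θ(w)‖² − Σᵢ wᵢ ‖pᵢ − θ(w)‖². Then: (i) for every w in the simplex, U(w) = −2r² − ‖θ(w) + p₃‖²; (ii) U(1/2, 1/2, 0) = −9r²/4; and (iii) for every w in the simplex, U(w) ≤ U(1/2, 1/2, 0), i.e., w♯ = (1/2, 1/2, 0) is an optimal collective strategy. -/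

import Mathlib

/-- **The equilateral-triangle example (Appendix C): the optimal collective strategy.**
With anchors `p₁, p₂, p₃` of norm `r` summing to zero, model `θ(w) = ∑ wᵢ pᵢ` and collective
utility `U(w) = −‖p₁ − θ‖² − ‖p₂ − θ‖² − ∑ wᵢ ‖pᵢ − θ‖²`: (i) on the simplex
`U(w) = −2r² − ‖θ(w) + p₃‖²`; (ii) `U(1/2, 1/2, 0) = −9r²/4`; (iii) `w♯ = (1/2, 1/2, 0)`
maximizes `U` over the simplex. -/
theorem triangle_example_optimal_collective
    {E : Type*} [NormedAddCommGroup E] [InnerProductSpace ℝ E]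
    (r : ℝ) (hr : 0 < r) (p₁ p₂ p₃ : E)
    (h1 : ‖p₁‖ = r) (h2 : ‖p₂‖ = r) (h3 : ‖p₃‖ = r) (hsum : p₁ + p₂ + p₃ = 0)
    (θ : ℝ → ℝ → ℝ → E)
    (hθ : ∀ w₁ w₂ w₃, θ w₁ w₂ w₃ = w₁ • p₁ + w₂ • p₂ + w₃ • p₃)
    (U : ℝ → ℝ → ℝ → ℝ)
    (hU : ∀ w₁ w₂ w₃, U w₁ w₂ w₃ =
      -‖p₁ - θ w₁ w₂ w₃‖ ^ 2 - ‖p₂ - θ w₁ w₂ w₃‖ ^ 2 -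
        (w₁ * ‖p₁ - θ w₁ w₂ w₃‖ ^ 2 + w₂ * ‖p₂ - θ w₁ w₂ w₃‖ ^ 2 +
          w₃ * ‖p₃ - θ w₁ w₂ w₃‖ ^ 2)) :
    -- (i)
    (∀ w₁ w₂ w₃ : ℝ, 0 ≤ w₁ → 0 ≤ w₂ → 0 ≤ w₃ → w₁ + w₂ + w₃ = 1 →
      U w₁ w₂ w₃ = -2 * r ^ 2 - ‖θ w₁ w₂ w₃ + p₃‖ ^ 2) ∧
    -- (ii)
    U (1 / 2) (1 / 2) 0 = -9 * r ^ 2 / 4 ∧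
    -- (iii)
    (∀ w₁ w₂ w₃ : ℝ, 0 ≤ w₁ → 0 ≤ w₂ → 0 ≤ w₃ → w₁ + w₂ + w₃ = 1 →
      U w₁ w₂ w₃ ≤ U (1 / 2) (1 / 2) 0) := by

  have e1 : (inner ℝ p₁ p₁ : ℝ) = r ^ 2 := by
    rw [real_inner_self_eq_norm_sq, h1]
  have e2 : (inner ℝ p₂ p₂ : ℝ) = r ^ 2 := by
    rw [real_inner_self_eq_norm_sq, h2]
  have e3 : (inner ℝ p₃ p₃ : ℝ) = r ^ 2 := by
    rw [real_inner_self_eq_norm_sq, h3]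
  have hp3 : p₃ = -(p₁ + p₂) := by
    rw [eq_neg_iff_add_eq_zero, add_comm]; exact hsum
  have h12 : (inner ℝ p₁ p₂ : ℝ) = -r ^ 2 / 2 := by
    have := e3
    rw [hp3] at this
    simp only [inner_neg_neg, inner_add_left, inner_add_right, e1, e2,
      real_inner_comm p₂ p₁] at this
    have hc := real_inner_comm p₁ p₂
    linarith
  have h21 : (inner ℝ p₂ p₁ : ℝ) = -r ^ 2 / 2 := by rw [real_inner_comm]; exact h12
  have h13 : (inner ℝ p₁ p₃ : ℝ) = -r ^ 2 / 2 := by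
    rw [hp3, inner_neg_right, inner_add_right, e1, h12]; ring
  have h31 : (inner ℝ p₃ p₁ : ℝ) = -r ^ 2 / 2 := by rw [real_inner_comm]; exact h13
  have h23 : (inner ℝ p₂ p₃ : ℝ) = -r ^ 2 / 2 := by
    rw [hp3, inner_neg_right, inner_add_right, e2, h21]; ring
  have h32 : (inner ℝ p₃ p₂ : ℝ) = -r ^ 2 / 2 := by rw [real_inner_comm]; exact h23
  have key : ∀ a b c : ℝ, ‖a • p₁ + b • p₂ + c • p₃‖ ^ 2 =
      r ^ 2 * (a ^ 2 + b ^ 2 + c ^ 2 - a * b - a * c - b * c) := by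
    intro a b c
    rw [← real_inner_self_eq_norm_sq]
    simp only [inner_add_left, inner_add_right, real_inner_smul_left,
      real_inner_smul_right, e1, e2, e3, h12, h21, h13, h31, h23, h32]
    ring
  have n1 : ∀ w₁ w₂ w₃ : ℝ, ‖p₁ - θ w₁ w₂ w₃‖ ^ 2 =
      r ^ 2 * ((1 - w₁) ^ 2 + (-w₂) ^ 2 + (-w₃) ^ 2 - (1 - w₁) * (-w₂)
        - (1 - w₁) * (-w₃) - (-w₂) * (-w₃)) := by
    intro w₁ w₂ w₃
    have hv : p₁ - θ w₁ w₂ w₃ = (1 - w₁) • p₁ + (-w₂) • p₂ + (-w₃) • p₃ := by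
      rw [hθ]; module
    rw [hv, key]
  have n2 : ∀ w₁ w₂ w₃ : ℝ, ‖p₂ - θ w₁ w₂ w₃‖ ^ 2 =
      r ^ 2 * ((-w₁) ^ 2 + (1 - w₂) ^ 2 + (-w₃) ^ 2 - (-w₁) * (1 - w₂)
        - (-w₁) * (-w₃) - (1 - w₂) * (-w₃)) := by
    intro w₁ w₂ w₃
    have hv : p₂ - θ w₁ w₂ w₃ = (-w₁) • p₁ + (1 - w₂) • p₂ + (-w₃) • p₃ := by
      rw [hθ]; module
    rw [hv, key]
  have n3 : ∀ w₁ w₂ w₃ : ℝ, ‖p₃ - θ w₁ w₂ w₃‖ ^ 2 =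
      r ^ 2 * ((-w₁) ^ 2 + (-w₂) ^ 2 + (1 - w₃) ^ 2 - (-w₁) * (-w₂)
        - (-w₁) * (1 - w₃) - (-w₂) * (1 - w₃)) := by
    intro w₁ w₂ w₃
    have hv : p₃ - θ w₁ w₂ w₃ = (-w₁) • p₁ + (-w₂) • p₂ + (1 - w₃) • p₃ := by
      rw [hθ]; module
    rw [hv, key]
  have nθ : ∀ w₁ w₂ w₃ : ℝ, ‖θ w₁ w₂ w₃ + p₃‖ ^ 2 =
      r ^ 2 * (w₁ ^ 2 + w₂ ^ 2 + (w₃ + 1) ^ 2 - w₁ * w₂ - w₁ * (w₃ + 1)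
        - w₂ * (w₃ + 1)) := by
    intro w₁ w₂ w₃
    have hv : θ w₁ w₂ w₃ + p₃ = w₁ • p₁ + w₂ • p₂ + (w₃ + 1) • p₃ := by
      rw [hθ]; module
    rw [hv, key]
  have part1 : ∀ w₁ w₂ w₃ : ℝ, 0 ≤ w₁ → 0 ≤ w₂ → 0 ≤ w₃ → w₁ + w₂ + w₃ = 1 →
      U w₁ w₂ w₃ = -2 * r ^ 2 - ‖θ w₁ w₂ w₃ + p₃‖ ^ 2 := by
    intro w₁ w₂ w₃ _ _ _ hw
    have hw3 : w₃ = 1 - w₁ - w₂ := by linarith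
    subst hw3
    rw [hU, n1, n2, n3, nθ]
    ring
  have part2 : U (1 / 2) (1 / 2) 0 = -9 * r ^ 2 / 4 := by
    rw [hU, n1, n2, n3]
    ring
  refine ⟨part1, part2, ?_⟩
  intro w₁ w₂ w₃ hw₁ hw₂ hw₃ hw
  rw [part1 w₁ w₂ w₃ hw₁ hw₂ hw₃ hw, part2, nθ]
  have hw3 : w₃ = 1 - w₁ - w₂ := by linarith
  subst hw3
  nlinarith [mul_nonneg (sq_nonneg r) hw₃, mul_nonneg (sq_nonneg r) (sq_nonneg (w₁ - w₂)),
    mul_nonneg (sq_nonneg r) (sq_nonneg (1 - w₁ - w₂))]
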